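/- Let n ≥ 1. For every g ∈ GL_n(ℂ) there exist a permutation matrix P, an upper unitriangular matrix u, a lower unitriangular matrix l, and an invertible diagonal matrix t, all n×n complex matrices, such that g = P·u·l·t. -/

import Mathlib

open Matrix

/-- An upper unitriangular complex matrix: upper triangular with all diagonal
entries equal to `1`. -/
def IsUpperUnitriangular {n : ℕ} (u : Matrix (Fin n) (Fin n) ℂ) : Prop :=
  (∀ i, u i i = 1) ∧ ∀ i j : Fin n, j < i → u i j = 0

/-- A lower unitriangular complex matrix: lower triangular with all diagonal
entries equal to `1`. -/
def IsLowerUnitriangular {n : ℕ} (l : Matrix (Fin n) (Fin n) ℂ) : Prop :=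
  (∀ i, l i i = 1) ∧ ∀ i j : Fin n, i < j → l i j = 0

lemma upper_mul {n : ℕ} {u v : Matrix (Fin n) (Fin n) ℂ}
    (hu : IsUpperUnitriangular u) (hv : IsUpperUnitriangular v) :
    IsUpperUnitriangular (u * v) := by
  constructor
  · intro i
    rw [Matrix.mul_apply, Finset.sum_eq_single i]
    · rw [hu.1, hv.1, one_mul]
    · intro k _ hk
      rcases lt_or_gt_of_ne hk with h | h
      · rw [hu.2 i k h, zero_mul]
      · rw [hv.2 k i h, mul_zero]
    · simp
  · intro i j hij
    rw [Matrix.mul_apply]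
    apply Finset.sum_eq_zero
    intro k _
    rcases lt_or_ge k i with h | h
    · rw [hu.2 i k h, zero_mul]
    · rw [hv.2 k j (lt_of_lt_of_le hij h), mul_zero]

lemma upper_det {n : ℕ} {u : Matrix (Fin n) (Fin n) ℂ}
    (hu : IsUpperUnitriangular u) : u.det = 1 := by
  rw [Matrix.det_of_upperTriangular (fun i j h => hu.2 i j h)]
  simp [hu.1]

lemma upper_isUnit {n : ℕ} {u : Matrix (Fin n) (Fin n) ℂ}
    (hu : IsUpperUnitriangular u) : IsUnit u := by
  rw [Matrix.isUnit_iff_isUnit_det, upper_det hu]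
  exact isUnit_one

lemma permMatrix_submatrix {α β : Type*} [DecidableEq α] [Fintype α] [DecidableEq β] [Fintype β]
    (e : α ≃ β) (π : Equiv.Perm α) :
    (π.permMatrix ℂ).submatrix ⇑e.symm ⇑e.symm = ((e.permCongr π).permMatrix ℂ) := by
  ext i j
  simp only [Matrix.submatrix_apply, Equiv.Perm.permMatrix, PEquiv.toMatrix_apply,
    Equiv.toPEquiv_apply, Option.mem_def, Option.some.injEq, Equiv.permCongr_apply]
  simp [Equiv.apply_eq_iff_eq_symm_apply]

lemma key : ∀ (n : ℕ) (g : Matrix (Fin n) (Fin n) ℂ), IsUnit g →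
    ∃ (σ : Equiv.Perm (Fin n)) (u b : Matrix (Fin n) (Fin n) ℂ),
      IsUpperUnitriangular u ∧ (∀ i j : Fin n, i < j → b i j = 0) ∧ IsUnit b ∧
      g = (σ.permMatrix ℂ) * u * b := by
  intro n
  induction n with
  | zero =>
    intro g _
    exact ⟨1, 1, 1, ⟨fun i => i.elim0, fun i => i.elim0⟩, fun i => i.elim0, isUnit_one,
      by ext i; exact i.elim0⟩
  | succ n IH =>
    intro g hg
    have hdet : g.det ≠ 0 := by
      intro h
      rw [Matrix.isUnit_iff_isUnit_det, h] at hg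
      exact not_isUnit_zero hg
    obtain ⟨i0, hi0⟩ : ∃ i, g i (Fin.last n) ≠ 0 := by
      by_contra hc
      push_neg at hc
      exact hdet (Matrix.det_eq_zero_of_column_eq_zero _ hc)
    set τ : Equiv.Perm (Fin (n+1)) := Equiv.swap i0 (Fin.last n) with hτ
    set h : Matrix (Fin (n+1)) (Fin (n+1)) ℂ := g.submatrix ⇑τ id with hh
    have hgh : g = τ.permMatrix ℂ * h := by
      rw [PEquiv.toMatrix_toPEquiv_mul]
      ext a b
      simp [hh, hτ, Equiv.swap_apply_self]
    have hp : h (Fin.last n) (Fin.last n) ≠ 0 := by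
      simpa [hh, hτ, Equiv.swap_apply_right] using hi0
    set p : ℂ := h (Fin.last n) (Fin.last n) with hpdef
    have hPτ : IsUnit (τ.permMatrix ℂ) := by
      rw [Matrix.isUnit_iff_isUnit_det, Matrix.det_permutation]
      rcases Int.units_eq_one_or τ.sign with hs | hs <;> simp [hs]
    have hhunit : IsUnit h := by
      obtain ⟨P, hP⟩ := hPτ
      have hPh : h = (↑P⁻¹ : Matrix (Fin (n+1)) (Fin (n+1)) ℂ) * g := by
        rw [hgh, ← hP, ← Matrix.mul_assoc, Units.inv_mul, Matrix.one_mul]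
      rw [hPh]
      exact (Units.isUnit P⁻¹).mul hg
    set c : Fin (n+1) → ℂ := fun a => h a (Fin.last n) / p with hc
    set u₁ : Matrix (Fin (n+1)) (Fin (n+1)) ℂ :=
      Matrix.of (fun a b => if a = b then 1 else
        if b = Fin.last n ∧ a ≠ Fin.last n then c a else 0) with hu₁def
    have hu₁ : IsUpperUnitriangular u₁ := by
      constructor
      · intro i; simp [hu₁def]
      · intro i j hij
        have h1 : i ≠ j := ne_of_gt hij
        have h2 : ¬(j = Fin.last n ∧ i ≠ Fin.last n) := by
          rintro ⟨rfl, -⟩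
          exact absurd hij (not_lt.mpr (Fin.le_last i))
        simp [hu₁def, h1, h2]
    set h' : Matrix (Fin (n+1)) (Fin (n+1)) ℂ :=
      Matrix.of (fun a b => if a = Fin.last n then h a b
        else h a b - c a * h (Fin.last n) b) with hh'
    have hfact : h = u₁ * h' := by
      ext a b
      rw [Matrix.mul_apply]
      have hterm : ∀ k, u₁ a k * h' k b =
          (if k = a then h' a b else 0) +
          (if k = Fin.last n then
            (if a = Fin.last n then 0 else c a * h' (Fin.last n) b) else 0) := by
        intro k
        by_cases hk : k = a
        · subst hk
          by_cases hkl : k = Fin.last n <;> simp [hu₁def, hkl]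
        · by_cases hkl : k = Fin.last n
          · subst hkl
            have ha : a ≠ Fin.last n := fun hha => hk hha.symm
            simp [hu₁def, Ne.symm hk, ha, hk]
          · simp [hu₁def, Ne.symm hk, hkl, hk]
      rw [Finset.sum_congr rfl (fun k _ => hterm k), Finset.sum_add_distrib]
      simp only [Finset.sum_ite_eq', Finset.mem_univ, if_true]
      by_cases ha : a = Fin.last n
      · subst ha; simp [hh']
      · simp only [ha, if_false]
        simp [hh', ha]
    have hcol : ∀ a, a ≠ Fin.last n → h' a (Fin.last n) = 0 := by
      intro a ha
      simp [hh', ha, hc, div_mul_cancel₀ _ hp]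
      rw [← hpdef, div_mul_cancel₀ _ hp, sub_self]
    have hll : h' (Fin.last n) (Fin.last n) = p := by simp [hh']; rfl
    have hh'unit : IsUnit h' := by
      obtain ⟨U, hU⟩ := upper_isUnit hu₁
      have hUh : h' = (↑U⁻¹ : Matrix (Fin (n+1)) (Fin (n+1)) ℂ) * h := by
        rw [hfact, ← hU, ← Matrix.mul_assoc, Units.inv_mul, Matrix.one_mul]
      rw [hUh]
      exact (Units.isUnit U⁻¹).mul hhunit
    -- block decomposition
    set e : Fin n ⊕ Fin 1 ≃ Fin (n+1) := finSumFinEquiv with he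
    have heinl : ∀ k : Fin n, e (Sum.inl k) = Fin.castSucc k := by
      intro k
      simp [he, Fin.ext_iff]
    have heinr : ∀ o : Fin 1, e (Sum.inr o) = Fin.last n := by
      intro o
      have : o = 0 := Subsingleton.elim o 0
      subst this
      simp [he, Fin.ext_iff]
    set A : Matrix (Fin n) (Fin n) ℂ :=
      Matrix.of (fun i j => h' (Fin.castSucc i) (Fin.castSucc j)) with hA
    set C : Matrix (Fin 1) (Fin n) ℂ :=
      Matrix.of (fun _ j => h' (Fin.last n) (Fin.castSucc j)) with hC
    set D : Matrix (Fin 1) (Fin 1) ℂ := Matrix.of (fun _ _ => p) with hD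
    have hM : h'.submatrix ⇑e ⇑e = Matrix.fromBlocks A 0 C D := by
      ext x y
      cases x with
      | inl k =>
        cases y with
        | inl m => simp [heinl, hA]
        | inr o =>
          have : (Fin.castSucc k) ≠ Fin.last n := (Fin.castSucc_lt_last k).ne
          simp [heinl, heinr, hcol _ this]
      | inr o =>
        cases y with
        | inl m => simp [heinl, heinr, hC]
        | inr o' => simp [heinr, hD, hll]
    have hdeth' : h'.det ≠ 0 := by
      rw [Matrix.isUnit_iff_isUnit_det, isUnit_iff_ne_zero] at hh'unit
      exact hh'unit
    have hdetfact : A.det * p = h'.det := by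
      have h1 : (h'.submatrix ⇑e ⇑e).det = h'.det := Matrix.det_submatrix_equiv_self e h'
      rw [hM] at h1
      rw [Matrix.det_fromBlocks_zero₁₂] at h1
      rw [← h1, Matrix.det_fin_one]
      rfl
    have hAunit : IsUnit A := by
      rw [Matrix.isUnit_iff_isUnit_det, isUnit_iff_ne_zero]
      intro h0
      rw [← hdetfact, h0, zero_mul] at hdeth'
      exact hdeth' rfl
    obtain ⟨σ', u', b', hu', hb'low, hb'unit, hAeq⟩ := IH A hAunit
    set σ₂ : Equiv.Perm (Fin (n+1)) := e.permCongr (Equiv.sumCongr σ' (Equiv.refl (Fin 1))) with hσ₂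
    have hesymml : ∀ k : Fin n, e.symm (Fin.castSucc k) = Sum.inl k := by
      intro k; rw [Equiv.symm_apply_eq, heinl]
    have hesymmr : e.symm (Fin.last n) = Sum.inr 0 := by
      rw [Equiv.symm_apply_eq, heinr]
    have hσ₂last : σ₂ (Fin.last n) = Fin.last n := by
      simp [hσ₂, Equiv.permCongr_apply, hesymmr, heinr]
    have hσ₂cast : ∀ k, σ₂ (Fin.castSucc k) = Fin.castSucc (σ' k) := by
      intro k
      simp [hσ₂, Equiv.permCongr_apply, hesymml, heinl]
    set u₂ : Matrix (Fin (n+1)) (Fin (n+1)) ℂ :=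
      (Matrix.fromBlocks u' 0 0 (1 : Matrix (Fin 1) (Fin 1) ℂ)).submatrix ⇑e.symm ⇑e.symm with hu₂def
    set b₂ : Matrix (Fin (n+1)) (Fin (n+1)) ℂ :=
      (Matrix.fromBlocks b' 0 C D).submatrix ⇑e.symm ⇑e.symm with hb₂def
    have hPblock : (Matrix.fromBlocks (σ'.permMatrix ℂ) 0 0
        (1 : Matrix (Fin 1) (Fin 1) ℂ)).submatrix ⇑e.symm ⇑e.symm = σ₂.permMatrix ℂ := by
      have hb : Matrix.fromBlocks (σ'.permMatrix ℂ) 0 0 (1 : Matrix (Fin 1) (Fin 1) ℂ) =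
          (Equiv.Perm.permMatrix ℂ (Equiv.sumCongr σ' (Equiv.refl (Fin 1)))) := by
        ext x y
        cases x <;> cases y <;>
          simp [Equiv.Perm.permMatrix, PEquiv.toMatrix_apply, Equiv.toPEquiv_apply,
            Option.mem_def, Matrix.one_apply, Subsingleton.elim (α := Fin 1)]
      rw [hb, permMatrix_submatrix]
    have hh'fact : h' = σ₂.permMatrix ℂ * u₂ * b₂ := by
      have h2 : h' = (Matrix.fromBlocks A 0 C D).submatrix ⇑e.symm ⇑e.symm := by
        rw [← hM]
        ext i j
        simp
      rw [h2, ← hPblock, hu₂def, hb₂def, Matrix.submatrix_mul_equiv, Matrix.submatrix_mul_equiv]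
      rw [Matrix.fromBlocks_multiply, Matrix.fromBlocks_multiply]
      simp [hAeq, Matrix.mul_assoc]
      
    have hcaseFin : ∀ i : Fin (n+1), (∃ k, i = Fin.castSucc k) ∨ i = Fin.last n := by
      intro i
      exact Fin.eq_castSucc_or_eq_last i
    have hu₂tri : IsUpperUnitriangular u₂ := by
      constructor
      · intro i
        rcases hcaseFin i with ⟨k, rfl⟩ | rfl
        · simp [hu₂def, hesymml, hu'.1]
        · simp [hu₂def, hesymmr, Matrix.one_apply]
      · intro i j hij
        rcases hcaseFin i with ⟨k, rfl⟩ | rfl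
        · rcases hcaseFin j with ⟨m, rfl⟩ | rfl
          · have : m < k := Fin.castSucc_lt_castSucc_iff.mp hij
            simp [hu₂def, hesymml, hu'.2 k m this]
          · exact absurd hij (not_lt.mpr (Fin.le_last _))
        · rcases hcaseFin j with ⟨m, rfl⟩ | rfl
          · simp [hu₂def, hesymml, hesymmr]
          · exact absurd hij (lt_irrefl _)
    have hb₂low : ∀ i j : Fin (n+1), i < j → b₂ i j = 0 := by
      intro i j hij
      rcases hcaseFin i with ⟨k, rfl⟩ | rfl
      · rcases hcaseFin j with ⟨m, rfl⟩ | rfl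
        · have : k < m := Fin.castSucc_lt_castSucc_iff.mp hij
          simp [hb₂def, hesymml, hb'low k m this]
        · simp [hb₂def, hesymml, hesymmr]
      · rcases hcaseFin j with ⟨m, rfl⟩ | rfl
        · exact absurd hij (not_lt.mpr (Fin.le_last _))
        · exact absurd hij (lt_irrefl _)
    have hb₂unit : IsUnit b₂ := by
      rw [Matrix.isUnit_iff_isUnit_det, hb₂def, Matrix.det_submatrix_equiv_self,
        Matrix.det_fromBlocks_zero₁₂, isUnit_iff_ne_zero]
      have hb'det : b'.det ≠ 0 := by
        rw [Matrix.isUnit_iff_isUnit_det, isUnit_iff_ne_zero] at hb'unit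
        exact hb'unit
      have hDdet : D.det = p := by rw [Matrix.det_fin_one]; rfl
      rw [hDdet]
      exact mul_ne_zero hb'det hp
    -- commuting u₁ past σ₂
    set u₁' : Matrix (Fin (n+1)) (Fin (n+1)) ℂ := u₁.submatrix ⇑σ₂.symm ⇑σ₂.symm with hu₁'def
    have hcomm : u₁ * σ₂.permMatrix ℂ = σ₂.permMatrix ℂ * u₁' := by
      rw [PEquiv.toMatrix_toPEquiv_mul, PEquiv.mul_toMatrix_toPEquiv]
      ext i j
      simp [hu₁'def]
    have hu₁'tri : IsUpperUnitriangular u₁' := by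
      constructor
      · intro i; simp [hu₁'def, hu₁def]
      · intro i j hij
        have hne : σ₂.symm i ≠ σ₂.symm j := fun hcc =>
          (ne_of_gt hij) (σ₂.symm.injective hcc)
        have hjl : σ₂.symm j ≠ Fin.last n := by
          intro hcc
          have hj : j = Fin.last n := by
            rw [← Equiv.apply_symm_apply σ₂ j, hcc, hσ₂last]
          rw [hj] at hij
          exact absurd hij (not_lt.mpr (Fin.le_last i))
        simp [hu₁'def, hu₁def, hne, hjl]
    refine ⟨τ.trans σ₂, u₁' * u₂, b₂, upper_mul hu₁'tri hu₂tri, hb₂low, hb₂unit, ?_⟩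
    have hPP : Equiv.Perm.permMatrix ℂ (τ.trans σ₂) = τ.permMatrix ℂ * σ₂.permMatrix ℂ := by
      rw [← PEquiv.toMatrix_trans, ← Equiv.toPEquiv_trans]
    rw [hPP, hgh, hfact, hh'fact]
    rw [← Matrix.mul_assoc, ← Matrix.mul_assoc, ← Matrix.mul_assoc]
    rw [Matrix.mul_assoc (τ.permMatrix ℂ) u₁ (σ₂.permMatrix ℂ), hcomm]
    rw [← Matrix.mul_assoc, ← Matrix.mul_assoc]

/-- Bruhat-type covering of `GL_n(ℂ)`: every invertible matrix factors as
(permutation matrix)·(upper unitriangular)·(lower unitriangular)·(invertible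
diagonal), i.e. `G = ⋃_{σ ∈ W} σ·U·Q` for the Borel subgroup `Q` of lower
triangular matrices. -/
theorem gl_n_bruhat_covering (n : ℕ) (hn : 1 ≤ n)
    (g : Matrix (Fin n) (Fin n) ℂ) (hg : IsUnit g) :
    ∃ (σ : Equiv.Perm (Fin n)) (u l t : Matrix (Fin n) (Fin n) ℂ),
      IsUpperUnitriangular u ∧ IsLowerUnitriangular l ∧
      t.IsDiag ∧ IsUnit t ∧
      g = (σ.permMatrix ℂ) * u * l * t := by
  obtain ⟨σ, u, b, hu, hblow, hbunit, hfac⟩ := key n g hg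
  set d : Fin n → ℂ := fun i => b i i with hd
  have hdetb : b.det = ∏ i, b i i := by
    apply Matrix.det_of_lowerTriangular
    intro i j hij
    exact hblow i j hij
  have hdne : ∀ i, d i ≠ 0 := by
    have hbd : b.det ≠ 0 := by
      rw [Matrix.isUnit_iff_isUnit_det, isUnit_iff_ne_zero] at hbunit
      exact hbunit
    rw [hdetb] at hbd
    intro i hi
    exact hbd (Finset.prod_eq_zero (Finset.mem_univ i) hi)
  set l : Matrix (Fin n) (Fin n) ℂ := Matrix.of (fun i j => b i j * (d j)⁻¹) with hl
  set t : Matrix (Fin n) (Fin n) ℂ := Matrix.diagonal d with ht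
  refine ⟨σ, u, l, t, hu, ⟨?_, ?_⟩, Matrix.isDiag_diagonal d, ?_, ?_⟩
  · intro i
    simp [hl, mul_inv_cancel₀ (hdne i)]
    exact mul_inv_cancel₀ (hdne i)
  · intro i j hij
    simp [hl, hblow i j hij]
  · rw [ht, Matrix.isUnit_diagonal]
    refine ⟨⟨d, fun i => (d i)⁻¹, ?_, ?_⟩, rfl⟩
    · funext i
      exact mul_inv_cancel₀ (hdne i)
    · funext i
      exact inv_mul_cancel₀ (hdne i)
  · have hlt : l * t = b := by
      ext i j
      rw [ht, Matrix.mul_diagonal]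
      simp [hl, inv_mul_cancel₀ (hdne j), mul_assoc]
    rw [Matrix.mul_assoc (σ.permMatrix ℂ * u) l t, hlt]
    exact hfac
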